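/- Consider the deterministic loss sequence on 3 actions over T rounds (T divisible by 3): ℓ_t = (0,1,1) for t ≤ T/3, ℓ_t = (1,0,1) for T/3 < t ≤ 2T/3, ℓ_t = (0,0,1) for 2T/3 < t ≤ T. If Alice plays action 1 on the first third, action 2 on the second third, and action 3 on the last third, then Alice's total loss is T/3 (so she has zero regret against the best single action), yet for any sequence of plays B_1,...,B_T by a second player avoiding collisions with Alice (where a collision gives loss 1), the total loss of Alice and Bob together is at least T, while the best pair of distinct fixed actions has total loss 2T/3; hence the pair regret is at least T/3. -/

import Mathlib

lemma stmt17_aux1 (a b : Fin 3) (hab : a ≠ b) (c : Fin 3) :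
    (1 : ℝ) ≤ (if a = c then 0 else 1) + (if b = c then 0 else 1) := by
  fin_cases a <;> fin_cases b <;> fin_cases c <;> simp_all <;> norm_num

lemma stmt17_aux2 (b : Fin 3) :
    (1 : ℝ) ≤ (if (2 : Fin 3) = 2 then 1 else 0) + (if b = 2 then 1 else 0) := by
  rw [if_pos rfl]
  have : (0 : ℝ) ≤ if b = 2 then 1 else 0 := by split_ifs <;> norm_num
  linarith

/-- Low regret for Alice alone does not suffice: on the explicit 3-action loss
sequence (with `T = 3n`), Alice's schedule (action 0, then 1, then 2 on the
thirds) has total loss `n = T/3` (zero regret for her), yet for every sequence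
of plays by Bob (with collisions giving effective loss `1` to both players) the
pair's total effective loss is at least `T = 3n`, while the best fixed pair of
distinct actions has total loss exactly `2n = 2T/3`; hence the pair's regret is
at least `n = T/3`. -/
theorem stmt17 (n : ℕ) (hn : 0 < n) (l : ℕ → Fin 3 → ℝ)
    (hl : ∀ t, l t = fun i =>
      if t < n then (if i = 0 then 0 else 1)
      else if t < 2 * n then (if i = 1 then 0 else 1)
      else (if i = 2 then 1 else 0))
    (A : ℕ → Fin 3)
    (hA : ∀ t, A t = if t < n then 0 else if t < 2 * n then 1 else 2) :
    (∑ t ∈ Finset.range (3 * n), l t (A t) = (n : ℝ)) ∧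
    (∀ B : ℕ → Fin 3,
      (3 * n : ℝ) ≤ ∑ t ∈ Finset.range (3 * n),
        (max (l t (A t)) (if A t = B t then 1 else 0) +
          max (l t (B t)) (if A t = B t then 1 else 0))) ∧
    (∃ a b : Fin 3, a ≠ b ∧
      ∑ t ∈ Finset.range (3 * n), (l t a + l t b) = (2 * n : ℝ)) ∧
    (∀ a b : Fin 3, a ≠ b →
      (2 * n : ℝ) ≤ ∑ t ∈ Finset.range (3 * n), (l t a + l t b)) ∧
    (∀ B : ℕ → Fin 3,
      (n : ℝ) ≤ (∑ t ∈ Finset.range (3 * n),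
        (max (l t (A t)) (if A t = B t then 1 else 0) +
          max (l t (B t)) (if A t = B t then 1 else 0))) - 2 * n) := by
  have hnn : ∀ t i, 0 ≤ l t i := by
    intro t i; rw [hl]; dsimp only; split_ifs <;> norm_num
  -- split a sum over range (3n) at 2n
  have hsplit : ∀ f : ℕ → ℝ, ∑ t ∈ Finset.range (3 * n), f t =
      ∑ t ∈ Finset.range (2 * n), f t + ∑ t ∈ Finset.Ico (2 * n) (3 * n), f t := by
    intro f
    rw [Finset.range_eq_Ico, Finset.range_eq_Ico]
    exact (Finset.sum_Ico_consecutive f (Nat.zero_le _) (show 2 * n ≤ 3 * n by omega)).symm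
  -- the indicator sum
  have hind : ∑ t ∈ Finset.range (3 * n), (if t < 2 * n then (1 : ℝ) else 0)
      = (2 * n : ℝ) := by
    rw [hsplit]
    have h1 : ∑ t ∈ Finset.range (2 * n), (if t < 2 * n then (1 : ℝ) else 0)
        = (2 * n : ℝ) := by
      rw [Finset.sum_congr rfl (fun t ht => by
        rw [if_pos (Finset.mem_range.mp ht)])]
      rw [Finset.sum_const, Finset.card_range]
      push_cast; ring
    have h2 : ∑ t ∈ Finset.Ico (2 * n) (3 * n), (if t < 2 * n then (1 : ℝ) else 0)
        = 0 := by
      apply Finset.sum_eq_zero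
      intro t ht
      rw [if_neg (by have := (Finset.mem_Ico.mp ht).1; omega)]
    rw [h1, h2, add_zero]
  -- Alice's per-round loss
  have hAl : ∀ t, l t (A t) = if t < 2 * n then 0 else 1 := by
    intro t
    rw [hl, hA]
    by_cases h1 : t < n
    · simp [h1, show t < 2 * n by omega]
    · by_cases h2 : t < 2 * n <;> simp [h1, h2]
  have part1 : ∑ t ∈ Finset.range (3 * n), l t (A t) = (n : ℝ) := by
    rw [Finset.sum_congr rfl (fun t _ => hAl t), hsplit]
    have h1 : ∑ t ∈ Finset.range (2 * n), (if t < 2 * n then (0 : ℝ) else 1)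
        = 0 := by
      apply Finset.sum_eq_zero
      intro t ht
      rw [if_pos (Finset.mem_range.mp ht)]
    have h2 : ∑ t ∈ Finset.Ico (2 * n) (3 * n), (if t < 2 * n then (0 : ℝ) else 1)
        = (n : ℝ) := by
      rw [Finset.sum_congr rfl (fun t ht => by
        rw [if_neg (by have := (Finset.mem_Ico.mp ht).1; omega)])]
      rw [Finset.sum_const, Nat.card_Ico, show 3 * n - 2 * n = n by omega]
      simp
    rw [h1, h2, zero_add]
  -- per-round lower bound for the pair
  have key : ∀ (B : ℕ → Fin 3) (t : ℕ), (1 : ℝ) ≤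
      max (l t (A t)) (if A t = B t then 1 else 0) +
        max (l t (B t)) (if A t = B t then 1 else 0) := by
    intro B t
    by_cases hc : A t = B t
    · rw [if_pos hc]
      have h1 := le_max_right (l t (A t)) (1 : ℝ)
      have h2 := le_max_right (l t (B t)) (1 : ℝ)
      linarith
    · rw [if_neg hc, max_eq_left (hnn t _), max_eq_left (hnn t _)]
      have hAt := hA t
      rw [hAt] at hc
      rw [hl, hAt]
      dsimp only
      by_cases h1 : t < n
      · rw [if_pos h1] at hc
        simp only [if_pos h1]
        exact stmt17_aux1 0 (B t) hc 0
      · by_cases h2 : t < 2 * n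
        · rw [if_neg h1, if_pos h2] at hc
          simp only [if_neg h1, if_pos h2]
          exact stmt17_aux1 1 (B t) hc 1
        · simp only [if_neg h1, if_neg h2]
          exact stmt17_aux2 (B t)
  have part2 : ∀ B : ℕ → Fin 3,
      (3 * n : ℝ) ≤ ∑ t ∈ Finset.range (3 * n),
        (max (l t (A t)) (if A t = B t then 1 else 0) +
          max (l t (B t)) (if A t = B t then 1 else 0)) := by
    intro B
    calc (3 * n : ℝ) = ∑ _t ∈ Finset.range (3 * n), (1 : ℝ) := by
          rw [Finset.sum_const, Finset.card_range]; push_cast; ring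
      _ ≤ _ := Finset.sum_le_sum (fun t _ => key B t)
  have part4 : ∀ a b : Fin 3, a ≠ b →
      (2 * n : ℝ) ≤ ∑ t ∈ Finset.range (3 * n), (l t a + l t b) := by
    intro a b hab
    have hterm : ∀ t, (if t < 2 * n then (1 : ℝ) else 0) ≤ l t a + l t b := by
      intro t
      by_cases h2 : t < 2 * n
      · rw [if_pos h2, hl]
        dsimp only
        by_cases h1 : t < n
        · simp only [if_pos h1]
          exact stmt17_aux1 a b hab 0
        · simp only [if_neg h1, if_pos h2]
          exact stmt17_aux1 a b hab 1
      · rw [if_neg h2]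
        have := hnn t a; have := hnn t b; linarith
    calc (2 * n : ℝ)
        = ∑ t ∈ Finset.range (3 * n), (if t < 2 * n then (1 : ℝ) else 0) := hind.symm
      _ ≤ _ := Finset.sum_le_sum (fun t _ => hterm t)
  refine ⟨part1, part2, ⟨0, 1, by decide, ?_⟩, part4, fun B => by
    have := part2 B; push_cast at this ⊢; linarith⟩
  have hterm : ∀ t, t ∈ Finset.range (3 * n) →
      l t 0 + l t 1 = (if t < 2 * n then (1 : ℝ) else 0) := by
    intro t _
    rw [hl]
    dsimp only
    by_cases h1 : t < n
    · simp [h1, show t < 2 * n by omega]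
    · by_cases h2 : t < 2 * n <;>
        simp [h1, h2, show (0 : Fin 3) ≠ 2 by decide, show (1 : Fin 3) ≠ 2 by decide,
          show (0 : Fin 3) ≠ 1 by decide, show (1 : Fin 3) ≠ 0 by decide]
  rw [Finset.sum_congr rfl hterm, hind]
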